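/- The sequence n ↦ b a^{n−1} b a^{n−2} b ⋯ b a b (with value ε at n = 0 and b at n = 1) is not poly-uniform: there is no finite set A of functions ℕ → ℕ such that for all n, every maximal block of consecutive a's in the n-th word has length in {P(n) | P ∈ A}. Concretely, the set of maximal a-block lengths of the n-th word is {0, 1, …, n−1}, whose cardinality is unbounded in n. -/

import Mathlib

/-- `β_c(u)`: the set of lengths of maximal blocks of consecutive `c`'s in `u`. -/
def maxBlocks {S : Type*} (c : S) (u : List S) : Set ℕ :=
  {k | ∃ x y : List S, u = x ++ List.replicate k c ++ y ∧
        x.getLast? ≠ some c ∧ y.head? ≠ some c}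

/-- The sequence `n ↦ b a^{n-1} b a^{n-2} ⋯ b a b`, over `{a,b}` encoded as `Bool`
with `a = true`, `b = false`. -/
def seqBA : ℕ → List Bool :=
  fun n => ((List.range n).reverse.map (fun i => false :: List.replicate i true)).flatten


lemma seqBA_succ (n : ℕ) : seqBA (n+1) = (false :: List.replicate n true) ++ seqBA n := by
  simp [seqBA, List.range_succ]

lemma seqBA_head (n : ℕ) (h : 1 ≤ n) : (seqBA n).head? = some false := by
  obtain ⟨m, rfl⟩ := Nat.exists_eq_add_of_le h
  rw [Nat.add_comm, seqBA_succ]; simp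

lemma seqBA_ne_nil (n : ℕ) (h : 1 ≤ n) : seqBA n ≠ [] := by
  intro hc; have := seqBA_head n h; rw [hc] at this; simp at this

lemma seqBA_getLast (n : ℕ) (h : 1 ≤ n) : (seqBA n).getLast? = some false := by
  induction n with
  | zero => omega
  | succ m ih =>
    rw [seqBA_succ, List.getLast?_append]
    rcases Nat.eq_zero_or_pos m with rfl | hm
    · simp [seqBA]
    · rw [ih hm]; simp

lemma run_le (n : ℕ) : ∀ x y k, seqBA n = x ++ List.replicate k true ++ y →
    x.getLast? ≠ some true → y.head? ≠ some true → k ≤ n - 1 := by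
  induction n with
  | zero =>
    intro x y k h _ _
    have : x ++ List.replicate k true ++ y = [] := h.symm
    simp at this
    omega
  | succ n ih =>
    intro x y k h hx hy
    rw [seqBA_succ] at h
    match x with
    | [] =>
      cases k with
      | zero => omega
      | succ j => simp [List.replicate_succ] at h
    | b :: x₁ =>
      rw [List.cons_append, List.append_assoc] at h
      obtain ⟨hb, h⟩ := List.cons.inj h
      rcases List.append_eq_append_iff.mp h with ⟨c, hc1, hc2⟩ | ⟨c, hc1, hc2⟩
      · -- x₁ = replicate n true ++ c, seqBA n = c ++ rep k ++ y
        rcases Nat.eq_zero_or_pos n with rfl | hn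
        · have : c ++ (List.replicate k true ++ y) = [] := by
            rw [← hc2]; simp [seqBA]
          simp at this; omega
        · rcases eq_or_ne c [] with rfl | hne
          · exfalso; apply hx
            subst hb hc1
            have he : (false :: (List.replicate n true ++ ([]:List Bool)))
                = [false] ++ List.replicate n true := by simp
            rw [he, List.getLast?_append]
            obtain ⟨m, rfl⟩ := Nat.exists_eq_add_of_le hn
            rw [Nat.add_comm, List.replicate_succ', List.getLast?_append]
            rfl
          · have hlast : c.getLast? ≠ some true := by
              intro hcl; apply hx; subst hb hc1
              have he : (false :: (List.replicate n true ++ c))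
                  = (false :: List.replicate n true) ++ c := by simp
              rw [he, List.getLast?_append, hcl]; rfl
            have := ih c y k (by rw [hc2, List.append_assoc]) hlast hy
            omega
      · -- replicate n true = x₁ ++ c, rep k ++ y = c ++ seqBA n
        have hc : c = List.replicate c.length true := by
          apply List.eq_replicate_of_mem
          intro b hbm
          have : b ∈ List.replicate n true := by rw [hc1]; exact List.mem_append_right _ hbm
          exact List.eq_of_mem_replicate this
        have hm : c.length ≤ n := by
          have := congrArg List.length hc1; simp at this; omega
        set m := c.length with hmdef
        by_cases hk : k ≤ m
        · omega
        · exfalso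
          rw [hc] at hc2
          have hrep : List.replicate k true =
              List.replicate m true ++ List.replicate (k - m) true := by
            rw [← List.replicate_add]; congr 1; omega
          rw [hrep, List.append_assoc] at hc2
          have h2 := List.append_cancel_left hc2
          obtain ⟨j, hj⟩ : ∃ j, k - m = j + 1 := ⟨k - m - 1, by omega⟩
          rw [hj, List.replicate_succ, List.cons_append] at h2
          rcases Nat.eq_zero_or_pos n with rfl | hn
          · have : seqBA 0 = [] := by simp [seqBA]
            rw [this] at h2; simp at h2
          · have := seqBA_head n hn
            rw [← h2] at this; simp at this

lemma mem_seqBA (n k : ℕ) (hk : k < n) : k ∈ maxBlocks true (seqBA n) := by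
  induction n with
  | zero => omega
  | succ n ih =>
    rcases eq_or_lt_of_le (Nat.lt_succ_iff.mp hk) with rfl | hk'
    · refine ⟨[false], seqBA k, by rw [seqBA_succ]; simp, by simp, ?_⟩
      rcases Nat.eq_zero_or_pos k with rfl | hn
      · simp [seqBA]
      · rw [seqBA_head k hn]; simp
    · rcases Nat.eq_zero_or_pos k with rfl | hkpos
      · exact ⟨seqBA (n+1), [], by simp, by rw [seqBA_getLast (n+1) (by omega)]; simp, by simp⟩
      · obtain ⟨x, y, hxy, hx, hy⟩ := ih hk'
        have hxne : x ≠ [] := by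
          rintro rfl
          have := seqBA_head n (by omega)
          rw [hxy] at this
          obtain ⟨j, rfl⟩ : ∃ j, k = j + 1 := ⟨k - 1, by omega⟩
          simp [List.replicate_succ] at this
        refine ⟨(false :: List.replicate n true) ++ x, y,
          by rw [seqBA_succ, hxy]; simp, ?_, hy⟩
        rw [List.getLast?_append]
        rcases List.exists_cons_of_ne_nil hxne with ⟨a, l, rfl⟩
        cases h : (a :: l).getLast? with
        | none => simp at h
        | some v => rw [h] at hx; simpa using hx

theorem seqBA_not_polyUniform :
    (∀ n : ℕ, 1 ≤ n → maxBlocks true (seqBA n) = {k : ℕ | k < n}) ∧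
    ¬ ∃ A : Set (ℕ → ℕ), A.Finite ∧
        ∀ n : ℕ, ∀ k ∈ maxBlocks true (seqBA n), ∃ P ∈ A, P n = k := by
  have h1 : ∀ n : ℕ, 1 ≤ n → maxBlocks true (seqBA n) = {k : ℕ | k < n} := by
    intro n hn
    ext k
    constructor
    · rintro ⟨x, y, hxy, hx, hy⟩
      have := run_le n x y k hxy hx hy
      simp only [Set.mem_setOf_eq]; omega
    · intro hk; exact mem_seqBA n k hk
  refine ⟨h1, ?_⟩
  rintro ⟨A, hfin, hall⟩
  set N := hfin.toFinset.card + 1 with hN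
  have hmem : ∀ k : Fin N, ∃ P ∈ A, P N = (k : ℕ) := by
    intro k
    exact hall N (k : ℕ) (by rw [h1 N (by omega)]; exact k.isLt)
  choose P hPA hPval using hmem
  have hinj : Function.Injective (fun k : Fin N => (⟨P k, hfin.mem_toFinset.mpr (hPA k)⟩ :
      hfin.toFinset)) := by
    intro i j hij
    have : P i = P j := congrArg Subtype.val hij
    have h2 := hPval i
    rw [this, hPval j] at h2
    exact Fin.ext h2.symm
  have := Fintype.card_le_of_injective _ hinj
  simp [Fintype.card_coe] at this
  omega
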